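/- Let $(X_n)$ be the minimal random walk with $q = 0$ and $1/2 < p < 1$. Then $X_n / a_n - s$ converges almost surely and in $L^m$ for every $m \geq 1$ to a random variable $M$ with $\mathbb{E}[M] = 0$, where $a_n = \Gamma(n+p)/(\Gamma(n)\Gamma(1+p))$. -/

import Mathlib

open MeasureTheory ProbabilityTheory Filter Real BoundedContinuousFunction Topology
open scoped ENNReal NNReal

noncomputable section

/-- The minimal random walk of Kumar–Harbola–Lindenberg: increments `η n ∈ {0,1}`,
`P(η 1 = 1) = s`, and for `n ≥ 1` the conditional expectation (i.e. conditional
probability of a forward step) given `σ(η 1, …, η n)` is `q + (p-q) X_n / n`,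
where `X_n = ∑_{k=1}^n η k`. -/
structure IsMinimalRW {Ω : Type*} [MeasurableSpace Ω] (μ : Measure Ω)
    (p q s : ℝ) (η : ℕ → Ω → ℝ) : Prop where
  meas : ∀ n, Measurable (η n)
  zero : ∀ ω, η 0 ω = 0
  vals : ∀ n, 1 ≤ n → ∀ᵐ ω ∂μ, η n ω = 0 ∨ η n ω = 1
  init : (μ {ω | η 1 ω = 1}).toReal = s
  cond : ∀ n : ℕ, 1 ≤ n →
      μ[η (n + 1) | ⨆ i ∈ Finset.Icc 1 n, MeasurableSpace.comap (η i) inferInstance]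
        =ᵐ[μ] fun ω => q + (p - q) * (∑ k ∈ Finset.Icc 1 n, η k ω) / n

/-- The position of the walk, `X_n = ∑_{k=1}^n η_k`. -/
def walkPos {Ω : Type*} (η : ℕ → Ω → ℝ) (n : ℕ) (ω : Ω) : ℝ := ∑ k ∈ Finset.Icc 1 n, η k ω

/-- The normalizing sequence `a_n = Γ(n+α)/(Γ(n)Γ(1+α))`. -/
def aSeq (α : ℝ) (n : ℕ) : ℝ := Real.Gamma (n + α) / (Real.Gamma n * Real.Gamma (1 + α))

def Rr (r : ℕ) (x : ℝ) : ℝ := ∏ j ∈ Finset.range r, (x + j)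

lemma aSeq_one {α : ℝ} (hα : 0 < α) : aSeq α 1 = 1 := by
  have h1 : Real.Gamma (1 + α) ≠ 0 := (Real.Gamma_pos_of_pos (by linarith)).ne'
  simp [aSeq, Real.Gamma_one]
  field_simp
  exact h1

lemma aSeq_pos {α : ℝ} (hα : 0 < α) {n : ℕ} (hn : 1 ≤ n) : 0 < aSeq α n := by
  have h0 : (0:ℝ) < n := by exact_mod_cast hn
  exact div_pos (Real.Gamma_pos_of_pos (by linarith)) (mul_pos (Real.Gamma_pos_of_pos h0)
    (Real.Gamma_pos_of_pos (by linarith)))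

lemma aSeq_succ {α : ℝ} (hα : 0 < α) {n : ℕ} (hn : 1 ≤ n) :
    aSeq α (n + 1) = aSeq α n * ((n + α) / n) := by
  have h0 : (0:ℝ) < n := by exact_mod_cast hn
  have h1 : Real.Gamma ((n:ℝ) + 1 + α) = ((n:ℝ) + α) * Real.Gamma ((n:ℝ) + α) := by
    rw [show (n:ℝ) + 1 + α = ((n:ℝ) + α) + 1 by ring, Real.Gamma_add_one (by positivity)]
  have h2 : Real.Gamma ((n:ℝ) + 1) = (n:ℝ) * Real.Gamma (n:ℝ) := by
    rw [Real.Gamma_add_one h0.ne']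
  have hg1 : Real.Gamma (n:ℝ) ≠ 0 := (Real.Gamma_pos_of_pos h0).ne'
  have hg2 : Real.Gamma (1 + α) ≠ 0 := (Real.Gamma_pos_of_pos (by linarith)).ne'
  simp only [aSeq, Nat.cast_add, Nat.cast_one]
  rw [h1, h2]
  field_simp

lemma one_le_aSeq {α : ℝ} (hα : 0 < α) : ∀ {n : ℕ}, 1 ≤ n → 1 ≤ aSeq α n := by
  intro n hn
  induction n, hn using Nat.le_induction with
  | base => rw [aSeq_one hα]
  | succ n hn ih =>
    have h0 : (0:ℝ) < n := by exact_mod_cast hn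
    rw [aSeq_succ hα hn]
    have : (1:ℝ) ≤ (n + α) / n := by
      rw [le_div_iff₀ h0]; linarith
    nlinarith

lemma aSeq_mul_le_pow {p : ℝ} (hp : 0 < p) {r : ℕ} (hr : 1 ≤ r) :
    ∀ {n : ℕ}, 1 ≤ n → aSeq (p * r) n ≤ (aSeq p n) ^ r := by
  have hpr : 0 < p * r := by positivity
  intro n hn
  induction n, hn using Nat.le_induction with
  | base => rw [aSeq_one hp, aSeq_one hpr, one_pow]
  | succ n hn ih =>
    have h0 : (0:ℝ) < n := by exact_mod_cast hn
    rw [aSeq_succ hp hn, aSeq_succ hpr hn, mul_pow]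
    have hb : ((n:ℝ) + p * r) / n ≤ (((n:ℝ) + p) / n) ^ r := by
      have : (1:ℝ) + (r:ℝ) * (p / n) ≤ (1 + p / n) ^ r := by
        refine one_add_mul_le_pow ?_ r
        have : (0:ℝ) < p / n := by positivity
        linarith
      calc ((n:ℝ) + p * r) / n = 1 + (r:ℝ) * (p / n) := by field_simp
        _ ≤ (1 + p / n) ^ r := this
        _ = (((n:ℝ) + p) / n) ^ r := by rw [show (1:ℝ) + p / n = ((n:ℝ) + p)/n by field_simp]
    have ha : 0 ≤ aSeq (p * r) n := (aSeq_pos hpr hn).le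
    have hb0 : 0 ≤ ((n:ℝ) + p * r) / n := by positivity
    calc aSeq (p*r) n * (((n:ℝ) + p * r) / n) ≤ (aSeq p n)^r * (((n:ℝ) + p*r)/n) := by
          exact mul_le_mul_of_nonneg_right ih hb0
      _ ≤ (aSeq p n)^r * ((((n:ℝ) + p)/n)^r) := by
          exact mul_le_mul_of_nonneg_left hb (pow_nonneg (aSeq_pos hp hn).le r)
      _ = _ := rfl

lemma Rr_eq_mul (t : ℕ) (x : ℝ) :
    Rr (t+1) x = x * Rr t (x + 1) := by
  rw [Rr, Rr, Finset.prod_range_succ']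
  push_cast
  rw [mul_comm, add_zero]
  congr 1
  exact Finset.prod_congr rfl (by intros; push_cast; ring)

lemma Rr_succ_eq (t : ℕ) (x : ℝ) :
    Rr (t+1) (x+1) = (x + (t+1)) * Rr t (x + 1) := by
  rw [Rr, Rr, Finset.prod_range_succ, mul_comm]
  congr 1
  push_cast; ring

lemma Rr_one' (r : ℕ) : Rr r 1 = r.factorial := by
  induction r with
  | zero => simp [Rr]
  | succ t ih =>
    rw [Rr, Finset.prod_range_succ, ← Rr, ih, Nat.factorial_succ]
    push_cast; ring

lemma pow_le_Rr {r : ℕ} {x : ℝ} (hx : 0 ≤ x) : x ^ r ≤ Rr r x := by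
  calc x ^ r = ∏ _j ∈ Finset.range r, x := by rw [Finset.prod_const, Finset.card_range]
    _ ≤ _ := Finset.prod_le_prod (fun _ _ => hx) (fun j _ => by have : (0:ℝ) ≤ (j:ℝ) := Nat.cast_nonneg j; linarith)

lemma Rr_nonneg {r : ℕ} {x : ℝ} (h0 : 0 ≤ x) : 0 ≤ Rr r x :=
  Finset.prod_nonneg fun j _ => by have : (0:ℝ) ≤ (j:ℝ) := Nat.cast_nonneg j; linarith

lemma Rr_abs_le {r : ℕ} {x B : ℝ} (h0 : 0 ≤ x) (hB : x ≤ B) : |Rr r x| ≤ Rr r B := by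
  rw [abs_of_nonneg (Rr_nonneg h0)]
  exact Finset.prod_le_prod (fun j _ => by have : (0:ℝ) ≤ (j:ℝ) := Nat.cast_nonneg j; linarith)
    (fun j _ => by linarith)

lemma measurable_Rr_comp {Ω : Type*} {mΩ : MeasurableSpace Ω} {f : Ω → ℝ}
    (hf : Measurable f) (r : ℕ) (c : ℝ) : Measurable fun ω => Rr r (f ω + c) := by
  unfold Rr
  exact Finset.measurable_prod _ fun j _ => by measurability

lemma add_pow_le_two_pow {u v : ℝ} (hu : 0 ≤ u) (hv : 0 ≤ v) (m : ℕ) :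
    (u + v) ^ m ≤ 2 ^ m * (u ^ m + v ^ m) := by
  have h1 : u + v ≤ 2 * max u v := by
    rcases le_total u v with h | h
    · rw [max_eq_right h]; linarith
    · rw [max_eq_left h]; linarith
  calc (u + v) ^ m ≤ (2 * max u v) ^ m :=
        pow_le_pow_left₀ (by positivity) h1 m
    _ = 2 ^ m * (max u v) ^ m := mul_pow 2 _ m
    _ ≤ 2 ^ m * (u ^ m + v ^ m) := by
        refine mul_le_mul_of_nonneg_left ?_ (by positivity)
        rcases le_total u v with h | h
        · rw [max_eq_right h]; nlinarith [pow_nonneg hu m]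
        · rw [max_eq_left h]; nlinarith [pow_nonneg hv m]

section LpAux

variable {Ω : Type*} {m0 : MeasurableSpace Ω} {μ : Measure Ω}

lemma lintegral_nnnorm_pow_le {f : Ω → ℝ} {m : ℕ} {B : ℝ}
    (hfi : Integrable (fun ω => |f ω| ^ m) μ) (h : ∫ ω, |f ω| ^ m ∂μ ≤ B) :
    ∫⁻ ω, (‖f ω‖₊ : ℝ≥0∞) ^ m ∂μ ≤ ENNReal.ofReal B := by
  have hpt : ∀ ω, (‖f ω‖₊ : ℝ≥0∞) ^ m = ENNReal.ofReal (|f ω| ^ m) := by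
    intro ω
    rw [ENNReal.ofReal_pow (abs_nonneg _), ← Real.enorm_eq_ofReal_abs, enorm_eq_nnnorm]
  calc ∫⁻ ω, (‖f ω‖₊ : ℝ≥0∞) ^ m ∂μ = ∫⁻ ω, ENNReal.ofReal (|f ω| ^ m) ∂μ :=
        lintegral_congr hpt
    _ = ENNReal.ofReal (∫ ω, |f ω| ^ m ∂μ) :=
        (ofReal_integral_eq_lintegral_ofReal hfi
          (Eventually.of_forall fun ω => by positivity)).symm
    _ ≤ ENNReal.ofReal B := ENNReal.ofReal_le_ofReal h

lemma eLpNorm_le_of_lintegral_pow {f : Ω → ℝ} {m : ℕ} (hm : 1 ≤ m) {B : ℝ}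
    (h : ∫⁻ ω, (‖f ω‖₊ : ℝ≥0∞) ^ m ∂μ ≤ ENNReal.ofReal B) :
    eLpNorm f m μ ≤ ENNReal.ofReal B ^ (1 / (m : ℝ)) := by
  have hm0 : ((m : ℝ≥0∞)) ≠ 0 := Nat.cast_ne_zero.mpr (by omega)
  rw [eLpNorm_eq_lintegral_rpow_enorm_toReal hm0 (by simp)]
  simp only [ENNReal.toReal_natCast, enorm_eq_nnnorm]
  have hrw : ∀ ω, (‖f ω‖₊ : ℝ≥0∞) ^ (m : ℝ) = (‖f ω‖₊ : ℝ≥0∞) ^ m := fun ω =>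
    ENNReal.rpow_natCast _ m
  rw [lintegral_congr hrw]
  exact ENNReal.rpow_le_rpow h (by positivity)

lemma unifIntegrable_of_pow_bound {f : ℕ → Ω → ℝ} {m : ℕ} (hm : 1 ≤ m) {B : ℝ} (hB : 0 ≤ B)
    (hmeas : ∀ n, AEStronglyMeasurable (f n) μ)
    (hbd : ∀ n, ∫⁻ ω, (‖f n ω‖₊ : ℝ≥0∞) ^ (2 * m) ∂μ ≤ ENNReal.ofReal B) :
    UnifIntegrable f (m : ℝ≥0∞) μ := by
  have hm0 : ((m : ℝ≥0∞)) ≠ 0 := Nat.cast_ne_zero.mpr (by omega)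
  refine unifIntegrable_of (by exact_mod_cast hm) (by simp) hmeas ?_
  intro ε hε
  set c : ℝ := (B + 1) * (1 + 1 / ε) with hc
  have hc0 : 0 < c := by positivity
  have hεc : B ≤ ε * c ∧ 1 ≤ ε * c := by
    have h1 : ε * c = (B + 1) * (ε + 1) := by
      rw [hc]; field_simp
    constructor <;> nlinarith
  refine ⟨c.toNNReal, fun n => ?_⟩
  set g : Ω → ℝ := {x | c.toNNReal ≤ ‖f n x‖₊}.indicator (f n) with hg
  have key : ∀ ω, (‖g ω‖₊ : ℝ≥0∞) ^ m * ENNReal.ofReal c ^ m ≤ (‖f n ω‖₊ : ℝ≥0∞) ^ (2 * m) := by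
    intro ω
    by_cases hω : ω ∈ {x | c.toNNReal ≤ ‖f n x‖₊}
    · have hgω : g ω = f n ω := Set.indicator_of_mem hω _
      have hcle : ENNReal.ofReal c ≤ (‖f n ω‖₊ : ℝ≥0∞) := by
        rw [ENNReal.ofReal]
        exact_mod_cast hω
      calc (‖g ω‖₊ : ℝ≥0∞) ^ m * ENNReal.ofReal c ^ m
          ≤ (‖f n ω‖₊ : ℝ≥0∞) ^ m * (‖f n ω‖₊ : ℝ≥0∞) ^ m := by
            rw [hgω]
            exact mul_le_mul_right (pow_le_pow_left' hcle m) _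
        _ = (‖f n ω‖₊ : ℝ≥0∞) ^ (2 * m) := by rw [← pow_add, two_mul]
    · have hgω : g ω = 0 := Set.indicator_of_notMem hω _
      rw [hgω, nnnorm_zero]
      simp [zero_pow (show m ≠ 0 by omega)]
  have hkey2 : (∫⁻ ω, (‖g ω‖₊ : ℝ≥0∞) ^ m ∂μ) * ENNReal.ofReal c ^ m
      ≤ ENNReal.ofReal B := by
    rw [← lintegral_mul_const' _ _ (by simp)]
    exact le_trans (lintegral_mono key) (hbd n)
  have hBle : ENNReal.ofReal B ≤ (ENNReal.ofReal ε) ^ m * ENNReal.ofReal c ^ m := by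
    have h1 : (ENNReal.ofReal ε) ^ m * ENNReal.ofReal c ^ m = ENNReal.ofReal (ε * c) ^ m := by
      rw [← mul_pow, ← ENNReal.ofReal_mul hε.le]
    rw [h1]
    calc ENNReal.ofReal B ≤ ENNReal.ofReal (ε * c) := ENNReal.ofReal_le_ofReal hεc.1
      _ ≤ ENNReal.ofReal (ε * c) ^ m := le_self_pow₀ (by
            rw [show (1:ℝ≥0∞) = ENNReal.ofReal 1 by simp]
            exact ENNReal.ofReal_le_ofReal hεc.2) (show m ≠ 0 by omega)
  have hmain : ∫⁻ ω, (‖g ω‖₊ : ℝ≥0∞) ^ m ∂μ ≤ (ENNReal.ofReal ε) ^ m := by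
    have hc0' : ENNReal.ofReal c ≠ 0 := by
      simp [ENNReal.ofReal_eq_zero, not_le, hc0]
    have hne0 : ENNReal.ofReal c ^ m ≠ 0 := pow_ne_zero m hc0'
    have hnetop : ENNReal.ofReal c ^ m ≠ ⊤ := ENNReal.pow_ne_top ENNReal.ofReal_ne_top
    exact (ENNReal.mul_le_mul_iff_left hne0 hnetop).mp (le_trans hkey2 hBle)
  have := eLpNorm_le_of_lintegral_pow (μ := μ) hm (B := (ε ^ m)) (f := g) ?_
  · refine le_trans this (le_of_eq ?_)
    rw [ENNReal.ofReal_pow hε.le, ← ENNReal.rpow_natCast _ m, ← ENNReal.rpow_mul,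
      mul_one_div, div_self (by exact_mod_cast (show m ≠ 0 by omega) : (m:ℝ) ≠ 0),
      ENNReal.rpow_one]
  · rw [ENNReal.ofReal_pow hε.le]
    exact hmain

end LpAux

section Walk

variable {Ω : Type*} {m0 : MeasurableSpace Ω} {μ : Measure Ω} [IsProbabilityMeasure μ]
  {p s : ℝ} {η : ℕ → Ω → ℝ}

def rwFilt (η : ℕ → Ω → ℝ) (hm : ∀ n, Measurable (η n)) : Filtration ℕ m0 where
  seq n := ⨆ i ∈ Finset.Icc 1 n, MeasurableSpace.comap (η i) inferInstance
  mono' := fun i j hij => by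
    refine iSup_le fun k => iSup_le fun hk => ?_
    refine le_trans ?_ (le_iSup _ k)
    exact le_iSup (fun _ : k ∈ Finset.Icc 1 j => MeasurableSpace.comap (η k) inferInstance)
      (Finset.mem_Icc.mpr ⟨(Finset.mem_Icc.mp hk).1, le_trans (Finset.mem_Icc.mp hk).2 hij⟩)
  le' n := iSup_le fun k => iSup_le fun _ => measurable_iff_comap_le.mp (hm k)

lemma rwFilt_apply (hm : ∀ n, Measurable (η n)) (n : ℕ) :
    (rwFilt η hm n : MeasurableSpace Ω) =
      ⨆ i ∈ Finset.Icc 1 n, MeasurableSpace.comap (η i) inferInstance := rfl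

lemma eta_meas_filt (hm : ∀ n, Measurable (η n)) {k n : ℕ} (h1 : 1 ≤ k) (h2 : k ≤ n) :
    Measurable[(rwFilt η hm n : MeasurableSpace Ω)] (η k) := by
  refine Measurable.mono (measurable_iff_comap_le.mpr le_rfl) ?_ le_rfl
  refine le_trans ?_ (le_iSup _ k)
  exact le_iSup (fun _ : k ∈ Finset.Icc 1 n => MeasurableSpace.comap (η k) inferInstance)
    (Finset.mem_Icc.mpr ⟨h1, h2⟩)

lemma walkPos_meas_filt (hm : ∀ n, Measurable (η n)) {k n : ℕ} (h2 : k ≤ n) :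
    Measurable[(rwFilt η hm n : MeasurableSpace Ω)] (walkPos η k) := by
  unfold walkPos
  refine Finset.measurable_sum _ fun i hi => ?_
  exact eta_meas_filt hm (Finset.mem_Icc.mp hi).1 (le_trans (Finset.mem_Icc.mp hi).2 h2)

variable (hrw : IsMinimalRW μ p 0 s η)
include hrw

lemma eta_ae_bdd : ∀ᵐ ω ∂μ, ∀ k, 0 ≤ η k ω ∧ η k ω ≤ 1 := by
  rw [ae_all_iff]
  intro k
  rcases Nat.eq_zero_or_pos k with hk | hk
  · subst hk; filter_upwards with ω; rw [hrw.zero ω]; norm_num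
  · filter_upwards [hrw.vals k hk] with ω hω
    rcases hω with h | h <;> rw [h] <;> norm_num

lemma walkPos_ae_bdd (n : ℕ) : ∀ᵐ ω ∂μ, 0 ≤ walkPos η n ω ∧ walkPos η n ω ≤ n := by
  filter_upwards [eta_ae_bdd hrw] with ω hω
  constructor
  · exact Finset.sum_nonneg fun k _ => (hω k).1
  · calc walkPos η n ω ≤ ∑ k ∈ Finset.Icc 1 n, (1:ℝ) :=
        Finset.sum_le_sum fun k _ => (hω k).2
      _ = (n : ℝ) := by simp [Nat.card_Icc]

lemma integrable_eta (k : ℕ) : Integrable (η k) μ := by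
  refine Integrable.mono' (integrable_const 1) (hrw.meas k).aestronglyMeasurable ?_
  filter_upwards [eta_ae_bdd hrw] with ω hω
  rw [Real.norm_eq_abs, abs_le]
  exact ⟨by linarith [(hω k).1], (hω k).2⟩

lemma integrable_walkPos (n : ℕ) : Integrable (walkPos η n) μ := by
  unfold walkPos
  exact integrable_finset_sum _ fun k _ => integrable_eta hrw k


lemma condexp_eta_succ {n : ℕ} (hn : 1 ≤ n) :
    μ[η (n+1) | (rwFilt η hrw.meas n : MeasurableSpace Ω)]
      =ᵐ[μ] fun ω => p * walkPos η n ω / n := by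
  have h := hrw.cond n hn
  refine h.trans (Eventually.of_forall fun ω => ?_)
  simp only [walkPos]
  ring

lemma condexp_walkPos_succ {n : ℕ} (hn : 1 ≤ n) :
    μ[walkPos η (n+1) | (rwFilt η hrw.meas n : MeasurableSpace Ω)]
      =ᵐ[μ] fun ω => (1 + p / n) * walkPos η n ω := by
  have hm := (rwFilt η hrw.meas).le n
  have hX : walkPos η (n+1) = walkPos η n + η (n+1) := by
    funext ω
    exact Finset.sum_Icc_succ_top (Nat.le_add_left 1 n) _
  rw [hX]
  refine (condExp_add (integrable_walkPos hrw n) (integrable_eta hrw (n+1)) _).trans ?_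
  have h1 : μ[walkPos η n | (rwFilt η hrw.meas n : MeasurableSpace Ω)] = walkPos η n :=
    condExp_of_stronglyMeasurable hm
      ((walkPos_meas_filt hrw.meas le_rfl).stronglyMeasurable) (integrable_walkPos hrw n)
  rw [h1]
  filter_upwards [condexp_eta_succ hrw hn] with ω hω
  simp only [Pi.add_apply, hω]
  ring

lemma integral_eta_mul {n : ℕ} (hn : 1 ≤ n) {f : Ω → ℝ}
    (hfm : Measurable[(rwFilt η hrw.meas n : MeasurableSpace Ω)] f) {c : ℝ}
    (hbd : ∀ᵐ ω ∂μ, |f ω| ≤ c) :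
    ∫ ω, η (n+1) ω * f ω ∂μ = ∫ ω, (p * walkPos η n ω / n) * f ω ∂μ := by
  have hm := (rwFilt η hrw.meas).le n
  have hfm0 : Measurable f := hfm.mono hm le_rfl
  have hint_fg : Integrable (f * η (n+1)) μ := by
    refine Integrable.mono' (integrable_const c) (hfm0.mul (hrw.meas (n+1))).aestronglyMeasurable ?_
    filter_upwards [eta_ae_bdd hrw, hbd] with ω hω hb
    have h0 : 0 ≤ η (n+1) ω := (hω (n+1)).1
    have h1 : η (n+1) ω ≤ 1 := (hω (n+1)).2
    have : |f ω * η (n+1) ω| = |f ω| * η (n+1) ω := by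
      rw [abs_mul, abs_of_nonneg h0]
    rw [Real.norm_eq_abs, Pi.mul_apply, this]
    calc |f ω| * η (n+1) ω ≤ c * 1 :=
        mul_le_mul hb h1 h0 (le_trans (abs_nonneg _) hb)
      _ = c := mul_one c
  have hpull := condExp_mul_of_stronglyMeasurable_left (μ := μ) hfm.stronglyMeasurable hint_fg
    (integrable_eta hrw (n+1))
  calc ∫ ω, η (n+1) ω * f ω ∂μ = ∫ ω, (f * η (n+1)) ω ∂μ := by
        refine integral_congr_ae (Eventually.of_forall fun ω => ?_)
        simp [mul_comm]
    _ = ∫ ω, (μ[f * η (n+1)|(rwFilt η hrw.meas n : MeasurableSpace Ω)]) ω ∂μ :=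
        (integral_condExp hm).symm
    _ = ∫ ω, f ω * (μ[η (n+1)|(rwFilt η hrw.meas n : MeasurableSpace Ω)]) ω ∂μ :=
        integral_congr_ae hpull
    _ = ∫ ω, (p * walkPos η n ω / n) * f ω ∂μ := by
        refine integral_congr_ae ?_
        filter_upwards [condexp_eta_succ hrw hn] with ω hω
        rw [hω, mul_comm]

lemma integral_eta_one : ∫ ω, η 1 ω ∂μ = s := by
  have hA : MeasurableSet {ω | η 1 ω = 1} := (hrw.meas 1) (measurableSet_singleton 1)
  have he : η 1 =ᵐ[μ] Set.indicator {ω | η 1 ω = 1} (fun _ => (1:ℝ)) := by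
    filter_upwards [hrw.vals 1 le_rfl] with ω hω
    rcases hω with h | h
    · rw [h, Set.indicator_of_notMem]
      simp [h]
    · rw [h]
      have hmem : ω ∈ {ω | η 1 ω = 1} := h
      rw [Set.indicator_of_mem hmem]
  rw [integral_congr_ae he]
  have := MeasureTheory.integral_indicator_one (μ := μ) hA
  rw [show ({ω | η 1 ω = 1}.indicator fun _ => (1:ℝ)) = ({ω | η 1 ω = 1}.indicator 1) from rfl,
    this]
  exact hrw.init

lemma integral_Rr_base {r : ℕ} (hr : 1 ≤ r) :
    ∫ ω, Rr r (walkPos η 1 ω) ∂μ = r.factorial * s := by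
  obtain ⟨t, rfl⟩ := Nat.exists_eq_add_of_le hr
  have hX1 : ∀ ω, walkPos η 1 ω = η 1 ω := by
    intro ω; simp [walkPos]
  have he : (fun ω => Rr (1+t) (walkPos η 1 ω)) =ᵐ[μ]
      fun ω => ((1+t).factorial : ℝ) * η 1 ω := by
    filter_upwards [hrw.vals 1 le_rfl] with ω hω
    rw [hX1 ω]
    rcases hω with h | h
    · rw [h]
      rw [show (1+t) = t+1 from add_comm 1 t, Rr_eq_mul]
      simp
    · rw [h, Rr_one', mul_one]
  rw [integral_congr_ae he, integral_const_mul, integral_eta_one hrw]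

lemma integral_Rr_rec {r n : ℕ} (hr : 1 ≤ r) (hn : 1 ≤ n) :
    ∫ ω, Rr r (walkPos η (n+1) ω) ∂μ
      = (1 + p * r / n) * ∫ ω, Rr r (walkPos η n ω) ∂μ := by
  obtain ⟨t, ht⟩ := Nat.exists_eq_add_of_le hr
  have htr : r = t + 1 := by omega
  subst htr
  set X := walkPos η n with hXdef
  set P : Ω → ℝ := fun ω => Rr t (X ω + 1) with hPdef
  have hXmeas : Measurable X := (walkPos_meas_filt hrw.meas (le_refl n)).mono
    ((rwFilt η hrw.meas).le n) le_rfl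
  have hPmeas0 : Measurable[(rwFilt η hrw.meas n : MeasurableSpace Ω)] P := by
    have := measurable_Rr_comp (mΩ := (rwFilt η hrw.meas n : MeasurableSpace Ω))
      (walkPos_meas_filt hrw.meas (le_refl n)) t 1
    exact this
  have hPbd : ∀ᵐ ω ∂μ, |P ω| ≤ Rr t ((n:ℝ) + 1) := by
    filter_upwards [walkPos_ae_bdd hrw n] with ω hω
    exact Rr_abs_le (by linarith [hω.1]) (by linarith [hω.2])
  -- pointwise identity
  have hstep : (fun ω => Rr (t+1) (walkPos η (n+1) ω)) =ᵐ[μ]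
      fun ω => Rr (t+1) (X ω) + η (n+1) ω * (((t:ℝ)+1) * P ω) := by
    filter_upwards [hrw.vals (n+1) (Nat.le_add_left 1 n)] with ω hω
    have hsum : walkPos η (n+1) ω = X ω + η (n+1) ω :=
      Finset.sum_Icc_succ_top (Nat.le_add_left 1 n) _
    rcases hω with h | h
    · rw [hsum, h]; simp
    · rw [hsum, h, Rr_succ_eq, Rr_eq_mul]
      simp only [hPdef]
      ring
  have hRint : ∀ m : ℕ, Integrable (fun ω => Rr (t+1) (walkPos η m ω)) μ := by
    intro m
    refine Integrable.mono' (integrable_const (Rr (t+1) (m:ℝ)))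
      (by
        have h := measurable_Rr_comp ((walkPos_meas_filt hrw.meas (le_refl m)).mono
          ((rwFilt η hrw.meas).le m) le_rfl) (t+1) 0
        simp only [add_zero] at h
        exact h.aestronglyMeasurable) ?_
    filter_upwards [walkPos_ae_bdd hrw m] with ω hω
    rw [Real.norm_eq_abs]
    exact Rr_abs_le hω.1 hω.2
  have hetaPint : Integrable (fun ω => η (n+1) ω * (((t:ℝ)+1) * P ω)) μ := by
    refine Integrable.mono' (integrable_const (((t:ℝ)+1) * Rr t ((n:ℝ)+1)))
      (((hrw.meas (n+1)).mul ((measurable_const).mul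
        (hPmeas0.mono ((rwFilt η hrw.meas).le n) le_rfl))).aestronglyMeasurable) ?_
    filter_upwards [eta_ae_bdd hrw, hPbd] with ω hω hb
    rw [Real.norm_eq_abs, abs_mul, abs_mul]
    have h0 := (hω (n+1)).1
    have h1 := (hω (n+1)).2
    have ht0 : |((t:ℝ)+1)| = (t:ℝ)+1 := abs_of_nonneg (by positivity)
    rw [ht0, abs_of_nonneg h0]
    have hP0 : (0:ℝ) ≤ Rr t ((n:ℝ)+1) := le_trans (abs_nonneg _) hb
    calc η (n+1) ω * (((t:ℝ)+1) * |P ω|)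
        ≤ 1 * (((t:ℝ)+1) * Rr t ((n:ℝ)+1)) := by
          refine mul_le_mul h1 (by nlinarith) (by positivity) zero_le_one
      _ = ((t:ℝ)+1) * Rr t ((n:ℝ)+1) := one_mul _
  rw [integral_congr_ae hstep, integral_add (hRint n) hetaPint]
  have hmul : ∫ ω, η (n+1) ω * (((t:ℝ)+1) * P ω) ∂μ
      = ((t:ℝ)+1) * ∫ ω, η (n+1) ω * P ω ∂μ := by
    rw [← integral_const_mul]
    exact integral_congr_ae (Eventually.of_forall fun ω => by ring)
  rw [hmul, integral_eta_mul hrw hn hPmeas0 hPbd]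
  have hpt : ∀ ω, (p * X ω / n) * P ω = (p / n) * Rr (t+1) (X ω) := by
    intro ω
    rw [Rr_eq_mul]
    simp only [hPdef]
    ring
  rw [integral_congr_ae (Eventually.of_forall fun ω => hpt ω), integral_const_mul]
  push_cast
  ring

lemma integral_Rr_eq (hp : 0 < p) {r : ℕ} (hr : 1 ≤ r) :
    ∀ {n : ℕ}, 1 ≤ n →
      ∫ ω, Rr r (walkPos η n ω) ∂μ = r.factorial * s * aSeq (p * r) n := by
  have hpr : 0 < p * r := by positivity
  intro n hn
  induction n, hn using Nat.le_induction with
  | base => rw [integral_Rr_base hrw hr, aSeq_one hpr, mul_one]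
  | succ n hn ih =>
    have h0 : (0:ℝ) < n := by exact_mod_cast hn
    rw [integral_Rr_rec hrw hr hn, ih, aSeq_succ hpr hn]
    field_simp

lemma integral_pow_le (hp : 0 < p) (hs0 : 0 ≤ s) {r n : ℕ} (hr : 1 ≤ r) (hn : 1 ≤ n) :
    ∫ ω, (walkPos η n ω / aSeq p n) ^ r ∂μ ≤ r.factorial * s := by
  have ha := aSeq_pos hp hn
  have hXr_int : Integrable (fun ω => walkPos η n ω ^ r) μ := by
    refine Integrable.mono' (integrable_const ((n:ℝ) ^ r))
      (((walkPos_meas_filt hrw.meas (le_refl n)).mono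
        ((rwFilt η hrw.meas).le n) le_rfl).pow_const r).aestronglyMeasurable ?_
    filter_upwards [walkPos_ae_bdd hrw n] with ω hω
    rw [Real.norm_eq_abs, abs_pow, abs_of_nonneg hω.1]
    exact pow_le_pow_left₀ hω.1 hω.2 r
  have hRint : Integrable (fun ω => Rr r (walkPos η n ω)) μ := by
    refine Integrable.mono' (integrable_const (Rr r (n:ℝ)))
      (by
        have h := measurable_Rr_comp ((walkPos_meas_filt hrw.meas (le_refl n)).mono
          ((rwFilt η hrw.meas).le n) le_rfl) r 0
        simp only [add_zero] at h
        exact h.aestronglyMeasurable) ?_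
    filter_upwards [walkPos_ae_bdd hrw n] with ω hω
    rw [Real.norm_eq_abs]
    exact Rr_abs_le hω.1 hω.2
  have h1 : ∫ ω, walkPos η n ω ^ r ∂μ ≤ ∫ ω, Rr r (walkPos η n ω) ∂μ := by
    refine integral_mono_ae hXr_int hRint ?_
    filter_upwards [walkPos_ae_bdd hrw n] with ω hω
    exact pow_le_Rr hω.1
  have h2 : ∫ ω, Rr r (walkPos η n ω) ∂μ ≤ r.factorial * s * (aSeq p n) ^ r := by
    rw [integral_Rr_eq hrw hp hr hn]
    have := aSeq_mul_le_pow hp hr hn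
    have hfs : (0:ℝ) ≤ r.factorial * s := by positivity
    nlinarith [this]
  have hpt : ∀ ω, (walkPos η n ω / aSeq p n) ^ r = walkPos η n ω ^ r * ((aSeq p n) ^ r)⁻¹ := by
    intro ω; rw [div_pow, div_eq_mul_inv]
  calc ∫ ω, (walkPos η n ω / aSeq p n) ^ r ∂μ
      = (∫ ω, walkPos η n ω ^ r ∂μ) * ((aSeq p n) ^ r)⁻¹ := by
        rw [← integral_mul_const]
        exact integral_congr_ae (Eventually.of_forall fun ω => hpt ω)
    _ ≤ (r.factorial * s * (aSeq p n) ^ r) * ((aSeq p n) ^ r)⁻¹ := by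
        refine mul_le_mul_of_nonneg_right (le_trans h1 h2) (by positivity)
    _ = r.factorial * s := by
        field_simp

def Ywalk (p s : ℝ) (η : ℕ → Ω → ℝ) : ℕ → Ω → ℝ :=
  fun n ω => walkPos η (n+1) ω / aSeq p (n+1) - s

def shiftFilt (F : Filtration ℕ m0) : Filtration ℕ m0 where
  seq n := F (n+1)
  mono' i j h := F.mono (by omega)
  le' n := F.le _

lemma Ywalk_meas (n : ℕ) :
    Measurable[(rwFilt η hrw.meas (n+1) : MeasurableSpace Ω)] (Ywalk p s η n) :=
  ((walkPos_meas_filt hrw.meas le_rfl).div_const _).sub measurable_const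

lemma Ywalk_ae_bdd (hp : 0 < p) (hs : s ∈ Set.Icc (0:ℝ) 1) (n : ℕ) :
    ∀ᵐ ω ∂μ, |Ywalk p s η n ω| ≤ ((n:ℝ)+1) / aSeq p (n+1) + 1 := by
  have ha := aSeq_pos hp (show 1 ≤ n+1 by omega)
  filter_upwards [walkPos_ae_bdd hrw (n+1)] with ω hω
  have h1 : 0 ≤ walkPos η (n+1) ω / aSeq p (n+1) := div_nonneg hω.1 ha.le
  have h2 : walkPos η (n+1) ω / aSeq p (n+1) ≤ ((n:ℝ)+1) / aSeq p (n+1) := by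
    refine (div_le_div_iff_of_pos_right ha).mpr ?_
    have := hω.2
    push_cast at this ⊢
    linarith
  calc |Ywalk p s η n ω| ≤ |walkPos η (n+1) ω / aSeq p (n+1)| + |s| := abs_sub _ _
    _ ≤ ((n:ℝ)+1) / aSeq p (n+1) + 1 := by
      rw [abs_of_nonneg h1, abs_of_nonneg hs.1]
      exact add_le_add h2 hs.2

lemma integrable_Ywalk (hp : 0 < p) (hs : s ∈ Set.Icc (0:ℝ) 1) (n : ℕ) :
    Integrable (Ywalk p s η n) μ := by
  refine Integrable.mono' (integrable_const (((n:ℝ)+1) / aSeq p (n+1) + 1))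
    (((Ywalk_meas hrw n).mono ((rwFilt η hrw.meas).le (n+1)) le_rfl).aestronglyMeasurable) ?_
  filter_upwards [Ywalk_ae_bdd hrw hp hs n] with ω hω
  rwa [Real.norm_eq_abs]

lemma martingale_Ywalk (hp : 0 < p) (hs : s ∈ Set.Icc (0:ℝ) 1) :
    Martingale (Ywalk p s η) (shiftFilt (rwFilt η hrw.meas)) μ := by
  refine martingale_nat (fun n => (Ywalk_meas hrw n).stronglyMeasurable)
    (fun n => integrable_Ywalk hrw hp hs n) ?_
  intro n
  refine EventuallyEq.symm ?_
  show μ[Ywalk p s η (n+1)|(rwFilt η hrw.meas (n+1) : MeasurableSpace Ω)]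
      =ᵐ[μ] Ywalk p s η n
  have hsplit : Ywalk p s η (n+1)
      = (aSeq p (n+1+1))⁻¹ • walkPos η (n+1+1) - (fun _ => s) := by
    funext ω
    simp [Ywalk, smul_eq_mul, div_eq_inv_mul]
  have h1 : μ[Ywalk p s η (n+1)|(rwFilt η hrw.meas (n+1) : MeasurableSpace Ω)]
      =ᵐ[μ] μ[(aSeq p (n+1+1))⁻¹ • walkPos η (n+1+1)|(rwFilt η hrw.meas (n+1) :
        MeasurableSpace Ω)] - μ[(fun _ => s : Ω → ℝ)|(rwFilt η hrw.meas (n+1) :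
        MeasurableSpace Ω)] := by
    rw [hsplit]
    exact condExp_sub ((integrable_walkPos hrw (n+1+1)).smul ((aSeq p (n+1+1))⁻¹))
      (integrable_const s) _
  have h2 := condExp_smul (μ := μ) (m := (rwFilt η hrw.meas (n+1) : MeasurableSpace Ω))
    ((aSeq p (n+1+1))⁻¹) (walkPos η (n+1+1))
  have h3 : μ[(fun _ => s : Ω → ℝ)|(rwFilt η hrw.meas (n+1) : MeasurableSpace Ω)]
      = fun _ => s := condExp_const ((rwFilt η hrw.meas).le (n+1)) s
  have hc := condexp_walkPos_succ hrw (show 1 ≤ n+1 by omega)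
  refine h1.trans ?_
  have hA := aSeq_pos hp (show 1 ≤ n+1 by omega)
  have ha2 := aSeq_succ hp (show 1 ≤ n+1 by omega)
  filter_upwards [h2, hc] with ω h2ω hcω
  simp only [Pi.sub_apply, h3]
  rw [h2ω, Pi.smul_apply, smul_eq_mul, hcω]
  show (aSeq p (n+1+1))⁻¹ * ((1 + p / (↑(n+1):ℝ)) * walkPos η (n+1) ω) - s
      = Ywalk p s η n ω
  rw [ha2]
  simp only [Ywalk]
  have hN : (0:ℝ) < ((n+1 : ℕ):ℝ) := by positivity
  have hNp : (0:ℝ) < ((n+1 : ℕ):ℝ) + p := by positivity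
  field_simp

lemma integral_absY_pow_le (hp : 0 < p) (hs : s ∈ Set.Icc (0:ℝ) 1) {m : ℕ} (hm : 1 ≤ m)
    (n : ℕ) :
    ∫ ω, |Ywalk p s η n ω| ^ m ∂μ ≤ 2 ^ m * (m.factorial + 1) := by
  have ha := aSeq_pos hp (show 1 ≤ n+1 by omega)
  have hmeasY : Measurable (Ywalk p s η n) :=
    (Ywalk_meas hrw n).mono ((rwFilt η hrw.meas).le (n+1)) le_rfl
  have hmeasX : Measurable (fun ω => walkPos η (n+1) ω / aSeq p (n+1)) :=
    ((walkPos_meas_filt hrw.meas (le_refl (n+1))).mono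
      ((rwFilt η hrw.meas).le (n+1)) le_rfl).div_const _
  have hint1 : Integrable (fun ω => |Ywalk p s η n ω| ^ m) μ := by
    refine Integrable.mono' (integrable_const ((((n:ℝ)+1) / aSeq p (n+1) + 1) ^ m))
      ((hmeasY.abs.pow_const m).aestronglyMeasurable) ?_
    filter_upwards [Ywalk_ae_bdd hrw hp hs n] with ω hω
    rw [Real.norm_eq_abs, abs_pow, abs_abs]
    exact pow_le_pow_left₀ (abs_nonneg _) hω m
  have hintX : Integrable (fun ω => (walkPos η (n+1) ω / aSeq p (n+1)) ^ m) μ := by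
    refine Integrable.mono' (integrable_const ((((n:ℝ)+1) / aSeq p (n+1)) ^ m))
      ((hmeasX.pow_const m).aestronglyMeasurable) ?_
    filter_upwards [walkPos_ae_bdd hrw (n+1)] with ω hω
    rw [Real.norm_eq_abs, abs_pow, abs_of_nonneg (div_nonneg hω.1 ha.le)]
    refine pow_le_pow_left₀ (div_nonneg hω.1 ha.le) ?_ m
    refine (div_le_div_iff_of_pos_right ha).mpr ?_
    have := hω.2; push_cast at this ⊢; linarith
  have hint2 : Integrable
      (fun ω => (2:ℝ) ^ m * ((walkPos η (n+1) ω / aSeq p (n+1)) ^ m + s ^ m)) μ :=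
    ((hintX.add (integrable_const _)).const_mul _)
  have hmono : ∫ ω, |Ywalk p s η n ω| ^ m ∂μ
      ≤ ∫ ω, (2:ℝ) ^ m * ((walkPos η (n+1) ω / aSeq p (n+1)) ^ m + s ^ m) ∂μ := by
    refine integral_mono_ae hint1 hint2 ?_
    filter_upwards [walkPos_ae_bdd hrw (n+1)] with ω hω
    have hu : 0 ≤ walkPos η (n+1) ω / aSeq p (n+1) := div_nonneg hω.1 ha.le
    have habs : |Ywalk p s η n ω| ≤ walkPos η (n+1) ω / aSeq p (n+1) + s := by
      calc |Ywalk p s η n ω| ≤ |walkPos η (n+1) ω / aSeq p (n+1)| + |s| := abs_sub _ _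
        _ = walkPos η (n+1) ω / aSeq p (n+1) + s := by
            rw [abs_of_nonneg hu, abs_of_nonneg hs.1]
    calc |Ywalk p s η n ω| ^ m ≤ (walkPos η (n+1) ω / aSeq p (n+1) + s) ^ m :=
          pow_le_pow_left₀ (abs_nonneg _) habs m
      _ ≤ 2 ^ m * ((walkPos η (n+1) ω / aSeq p (n+1)) ^ m + s ^ m) :=
          add_pow_le_two_pow hu hs.1 m
  have hXP := integral_pow_le hrw hp hs.1 hm (show 1 ≤ n+1 by omega)
  have hcalc : ∫ ω, (2:ℝ) ^ m * ((walkPos η (n+1) ω / aSeq p (n+1)) ^ m + s ^ m) ∂μ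
      = 2 ^ m * ((∫ ω, (walkPos η (n+1) ω / aSeq p (n+1)) ^ m ∂μ) + s ^ m) := by
    rw [integral_const_mul, integral_add hintX (integrable_const _), integral_const]
    simp
  rw [hcalc] at hmono
  have hsm : s ^ m ≤ 1 := pow_le_one₀ hs.1 hs.2
  have hfpos : (0:ℝ) ≤ (m.factorial : ℝ) := by positivity
  have hfs : (m.factorial : ℝ) * s ≤ m.factorial := by nlinarith [hs.1, hs.2]
  have h2m : (0:ℝ) ≤ 2 ^ m := by positivity
  calc ∫ ω, |Ywalk p s η n ω| ^ m ∂μ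
      ≤ 2 ^ m * ((∫ ω, (walkPos η (n+1) ω / aSeq p (n+1)) ^ m ∂μ) + s ^ m) := hmono
    _ ≤ 2 ^ m * ((m.factorial : ℝ) + 1) := by nlinarith [hXP]

lemma integrable_absY_pow (hp : 0 < p) (hs : s ∈ Set.Icc (0:ℝ) 1) (m n : ℕ) :
    Integrable (fun ω => |Ywalk p s η n ω| ^ m) μ := by
  have hmeasY : Measurable (Ywalk p s η n) :=
    (Ywalk_meas hrw n).mono ((rwFilt η hrw.meas).le (n+1)) le_rfl
  refine Integrable.mono' (integrable_const ((((n:ℝ)+1) / aSeq p (n+1) + 1) ^ m))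
    ((hmeasY.abs.pow_const m).aestronglyMeasurable) ?_
  filter_upwards [Ywalk_ae_bdd hrw hp hs n] with ω hω
  rw [Real.norm_eq_abs, abs_pow, abs_abs]
  exact pow_le_pow_left₀ (abs_nonneg _) hω m

lemma integral_walkPos_eq (hp : 0 < p) {n : ℕ} (hn : 1 ≤ n) :
    ∫ ω, walkPos η n ω ∂μ = s * aSeq p n := by
  have h := integral_Rr_eq hrw hp (le_refl 1) hn
  have hrr : (fun ω => Rr 1 (walkPos η n ω)) = fun ω => walkPos η n ω := by
    funext ω; simp [Rr]
  rw [hrr] at h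
  rw [h]
  norm_num

end Walk

/-- For `q = 0` and `1/2 < p < 1`, `X_n / a_n - s` converges a.s. and in every `L^m`
to a random variable `M` with mean zero. -/
theorem minimalRW_q0_convergence {Ω : Type*} [MeasurableSpace Ω] (μ : Measure Ω)
    [IsProbabilityMeasure μ] (p s : ℝ) (hp0 : 1 / 2 < p) (hp1 : p < 1)
    (hs : s ∈ Set.Icc (0:ℝ) 1) (η : ℕ → Ω → ℝ) (hrw : IsMinimalRW μ p 0 s η) :
    ∃ M : Ω → ℝ,
      (∀ᵐ ω ∂μ, Tendsto (fun n : ℕ => walkPos η n ω / aSeq p n - s) atTop (nhds (M ω))) ∧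
      (∀ m : ℕ, 1 ≤ m →
        Tendsto (fun n : ℕ => ∫ ω, |walkPos η n ω / aSeq p n - s - M ω| ^ (m : ℝ) ∂μ)
          atTop (nhds 0)) ∧
      ∫ ω, M ω ∂μ = 0 := by
  have hp : 0 < p := by linarith
  set F := rwFilt η hrw.meas with hF
  set G := shiftFilt F with hG
  set Y := Ywalk p s η with hYdef
  have hmart : Martingale Y G μ := martingale_Ywalk hrw hp hs
  have hYmeas : ∀ n, AEStronglyMeasurable (Y n) μ := fun n =>
    ((Ywalk_meas hrw n).mono (F.le (n+1)) le_rfl).aestronglyMeasurable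
  set B : ℕ → ℝ := fun m => 2 ^ m * (m.factorial + 1) with hBdef
  have hBpos : ∀ m, 0 ≤ B m := fun m => by positivity
  have hlint : ∀ m : ℕ, 1 ≤ m → ∀ n, ∫⁻ ω, (‖Y n ω‖₊ : ℝ≥0∞) ^ m ∂μ ≤ ENNReal.ofReal (B m) :=
    fun m hm n => lintegral_nnnorm_pow_le (integrable_absY_pow hrw hp hs m n)
      (integral_absY_pow_le hrw hp hs hm n)
  have helb : ∀ m : ℕ, 1 ≤ m → ∀ n,
      eLpNorm (Y n) m μ ≤ ENNReal.ofReal (B m) ^ (1/(m:ℝ)) :=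
    fun m hm n => eLpNorm_le_of_lintegral_pow hm (hlint m hm n)
  have hbdd1 : ∀ n, eLpNorm (Y n) 1 μ ≤ ((B 1).toNNReal : ℝ≥0∞) := by
    intro n
    have h := helb 1 le_rfl n
    have heq : ENNReal.ofReal (B 1) = ((B 1).toNNReal : ℝ≥0∞) := rfl
    simpa [heq] using h
  set M := G.limitProcess Y μ with hM
  have h_ae : ∀ᵐ ω ∂μ, Tendsto (fun n => Y n ω) atTop (𝓝 (M ω)) :=
    hmart.submartingale.ae_tendsto_limitProcess hbdd1
  have hMmeas : AEStronglyMeasurable M μ :=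
    ((MeasureTheory.Filtration.stronglyMeasurable_limitProcess).mono (iSup_le fun n => G.le n)).aestronglyMeasurable
  have hMmem : ∀ m : ℕ, 1 ≤ m → MemLp M m μ := by
    intro m hm
    refine hmart.submartingale.memLp_limitProcess
      (R := (B m).toNNReal ^ (1/(m:ℝ))) (fun n => ?_)
    have h := helb m hm n
    rwa [ENNReal.coe_rpow_of_nonneg _ (by positivity : (0:ℝ) ≤ 1/(m:ℝ)),
      (rfl : ((B m).toNNReal : ℝ≥0∞) = ENNReal.ofReal (B m))]
  have hLm : ∀ m : ℕ, 1 ≤ m →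
      Tendsto (fun n => ∫ ω, |Y n ω - M ω| ^ (m:ℝ) ∂μ) atTop (𝓝 0) := by
    intro m hm
    have hmne : m ≠ 0 := by omega
    have hmR : ((m:ℝ)) ≠ 0 := by exact_mod_cast hmne
    have hmE : ((m : ℝ≥0∞)) ≠ 0 := Nat.cast_ne_zero.mpr hmne
    have hui : UnifIntegrable Y (m : ℝ≥0∞) μ :=
      unifIntegrable_of_pow_bound hm (hBpos (2*m)) hYmeas
        (fun n => hlint (2*m) (by omega) n)
    have hconv := tendsto_Lp_finite_of_tendsto_ae (p := (m:ℝ≥0∞))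
      (by exact_mod_cast hm) (by simp) hYmeas (hMmem m hm) hui h_ae
    have key : ∀ n, ∫ ω, |Y n ω - M ω| ^ (m:ℝ) ∂μ = (eLpNorm (Y n - M) m μ).toReal ^ m := by
      intro n
      have hsubmeas : AEStronglyMeasurable (fun ω => Y n ω - M ω) μ :=
        (hYmeas n).sub hMmeas
      have h1 : ∫ ω, |Y n ω - M ω| ^ (m:ℝ) ∂μ = ∫ ω, |Y n ω - M ω| ^ m ∂μ :=
        integral_congr_ae (Eventually.of_forall fun ω => Real.rpow_natCast _ m)
      have h2 : ∫ ω, |Y n ω - M ω| ^ m ∂μ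
          = (∫⁻ ω, (‖Y n ω - M ω‖₊ : ℝ≥0∞) ^ m ∂μ).toReal := by
        rw [integral_eq_lintegral_of_nonneg_ae
          (Eventually.of_forall fun ω => by positivity)
          (by
            have h := (hsubmeas.norm.aemeasurable.pow_const m).aestronglyMeasurable
            refine h.congr (Eventually.of_forall fun ω => ?_)
            simp [Real.norm_eq_abs])]
        congr 1
        refine lintegral_congr fun ω => ?_
        rw [ENNReal.ofReal_pow (abs_nonneg _), ← Real.enorm_eq_ofReal_abs, enorm_eq_nnnorm]
      have h3 : (∫⁻ ω, (‖Y n ω - M ω‖₊ : ℝ≥0∞) ^ m ∂μ) = eLpNorm (Y n - M) m μ ^ m := by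
        rw [eLpNorm_eq_lintegral_rpow_enorm_toReal hmE (by simp)]
        simp only [ENNReal.toReal_natCast, enorm_eq_nnnorm]
        rw [← ENNReal.rpow_natCast _ m, ← ENNReal.rpow_mul, one_div, inv_mul_cancel₀ hmR,
          ENNReal.rpow_one]
        refine lintegral_congr fun ω => ?_
        rw [← ENNReal.rpow_natCast _ m]
        rfl
      rw [h1, h2, h3, ENNReal.toReal_pow]
    have t1 : Tendsto (fun n => (eLpNorm (Y n - M) m μ).toReal) atTop (𝓝 0) := by
      have := (ENNReal.tendsto_toReal (by simp : (0:ℝ≥0∞) ≠ ⊤)).comp hconv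
      exact this
    have t2 := t1.pow m
    rw [zero_pow hmne] at t2
    simp_rw [key]
    exact t2
  refine ⟨M, ?_, ?_, ?_⟩
  · filter_upwards [h_ae] with ω hω
    exact (tendsto_add_atTop_iff_nat 1).mp hω
  · intro m hm
    exact (tendsto_add_atTop_iff_nat 1).mp (hLm m hm)
  · have hL1 := hLm 1 le_rfl
    simp only [Nat.cast_one, Real.rpow_one] at hL1
    have hMint : Integrable M μ := by
      have h := hMmem 1 le_rfl
      rw [Nat.cast_one] at h
      exact h.integrable le_rfl
    have hYint : ∀ n, Integrable (Y n) μ := fun n => integrable_Ywalk hrw hp hs n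
    have hiY : ∀ n, ∫ ω, Y n ω ∂μ = 0 := by
      intro n
      have ha := aSeq_pos hp (show 1 ≤ n+1 by omega)
      have h1 : ∫ ω, Y n ω ∂μ
          = (∫ ω, walkPos η (n+1) ω ∂μ) * (aSeq p (n+1))⁻¹ - s := by
        rw [hYdef]
        have hXdiv : Integrable (fun ω => walkPos η (n+1) ω * (aSeq p (n+1))⁻¹) μ :=
          (integrable_walkPos hrw (n+1)).mul_const _
        have : (Ywalk p s η n) = fun ω => walkPos η (n+1) ω * (aSeq p (n+1))⁻¹ - s := by
          funext ω; rw [Ywalk, div_eq_mul_inv]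
        rw [this, integral_sub hXdiv (integrable_const s), integral_mul_const, integral_const]
        simp
      rw [h1, integral_walkPos_eq hrw hp (show 1 ≤ n+1 by omega)]
      field_simp
      ring
    have hbound : ∀ n, |∫ ω, M ω ∂μ| ≤ ∫ ω, |Y n ω - M ω| ∂μ := by
      intro n
      have h1 : ∫ ω, (Y n ω - M ω) ∂μ = - ∫ ω, M ω ∂μ := by
        rw [integral_sub (hYint n) hMint, hiY n, zero_sub]
      calc |∫ ω, M ω ∂μ| = |∫ ω, (Y n ω - M ω) ∂μ| := by rw [h1, abs_neg]
        _ ≤ ∫ ω, |Y n ω - M ω| ∂μ := by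
            simpa [Real.norm_eq_abs] using
              norm_integral_le_integral_norm (μ := μ) (fun ω => Y n ω - M ω)
    have : |∫ ω, M ω ∂μ| ≤ 0 := ge_of_tendsto' hL1 hbound
    have habs := abs_nonneg (∫ ω, M ω ∂μ)
    have : |∫ ω, M ω ∂μ| = 0 := le_antisymm this habs
    exact abs_eq_zero.mp this
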